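/- Define R̄^{λ,λ′}_T(a) = (1 + H̄_T^{λ′}(a)) / (1 + H̄_T^λ(a)) for λ, λ′, T > 0 and a > 0. Then: (i) the map a ↦ R̄^{λ,λ′}_T(a) is monotone increasing on (0,∞) when λ′ ≤ λ, and monotone decreasing when λ′ ≥ λ; (ii) the map T ↦ R̄^{λ,λ′}_T(a) is monotone decreasing on (0,∞) when λ′ ≤ λ, and monotone increasing when λ′ ≥ λ. -/

import Mathlib

open MeasureTheory Real Set

/-- The Volterra function `ν(x) = ∫₀^∞ x^s / Γ(s+1) ds` (for `x > 0`; `ν(0) = 0`). -/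
noncomputable def volterra (x : ℝ) : ℝ := ∫ s in Set.Ioi (0 : ℝ), x ^ s / Real.Gamma (s + 1)

/-- rearrangement inequality for rpow -/
lemma rpow_rearrange {u v : ℝ} (hu : 0 < u) (huv : u ≤ v) {s t : ℝ} (hst : s ≤ t) :
    u ^ t * v ^ s ≤ u ^ s * v ^ t := by
  have hv : 0 < v := hu.trans_le huv
  have h1 : u ^ t = u ^ s * u ^ (t - s) := by
    rw [← Real.rpow_add hu]; ring_nf
  have h2 : v ^ t = v ^ s * v ^ (t - s) := by
    rw [← Real.rpow_add hv]; ring_nf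
  rw [h1, h2]
  have h3 : u ^ (t - s) ≤ v ^ (t - s) := Real.rpow_le_rpow hu.le huv (by linarith)
  have h4 : (0:ℝ) ≤ u ^ s := Real.rpow_nonneg hu.le s
  have h5 : (0:ℝ) ≤ v ^ s := Real.rpow_nonneg hv.le s
  have h6 : (0:ℝ) ≤ u ^ (t - s) := Real.rpow_nonneg hu.le _
  nlinarith [mul_le_mul_of_nonneg_left h3 (mul_nonneg h4 h5)]

/-- lower bound for the Gamma function -/
lemma Gamma_lb {s M : ℝ} (hs : 0 ≤ s) (hM : 0 < M) :
    M ^ s * (M * Real.exp (-(2 * M))) ≤ Real.Gamma (s + 1) := by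
  rw [Real.Gamma_eq_integral (by linarith : (0:ℝ) < s + 1)]
  have hint : IntegrableOn (fun x => Real.exp (-x) * x ^ (s + 1 - 1)) (Ioi (0:ℝ)) :=
    Real.GammaIntegral_convergent (by linarith)
  simp only [add_sub_cancel_right] at hint ⊢
  have h1 : ∫ x in Ioc M (2*M), Real.exp (-x) * x ^ s ≤ ∫ x in Ioi (0:ℝ), Real.exp (-x) * x ^ s := by
    apply setIntegral_mono_set hint
    · filter_upwards [ae_restrict_mem measurableSet_Ioi] with x hx
      exact mul_nonneg (Real.exp_nonneg _) (Real.rpow_nonneg (le_of_lt hx) _)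
    · exact HasSubset.Subset.eventuallyLE (fun x hx => lt_of_lt_of_le hM hx.1.le)
  have h2 : M ^ s * (M * Real.exp (-(2 * M)))
      ≤ ∫ x in Ioc M (2*M), Real.exp (-x) * x ^ s := by
    have h3 : ∫ _x in Ioc M (2*M), Real.exp (-(2*M)) * M ^ s
        = M * (Real.exp (-(2*M)) * M ^ s) := by
      rw [setIntegral_const, Real.volume_real_Ioc, smul_eq_mul,
        max_eq_left (by linarith)]
      ring_nf
    have h4 : ∫ _x in Ioc M (2*M), Real.exp (-(2*M)) * M ^ s
        ≤ ∫ x in Ioc M (2*M), Real.exp (-x) * x ^ s := by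
      apply setIntegral_mono_on
      · exact integrableOn_const (by rw [Real.volume_Ioc]; exact ENNReal.ofReal_ne_top)
      · exact hint.mono_set (fun x hx => lt_of_lt_of_le hM hx.1.le)
      · exact measurableSet_Ioc
      · intro x hx
        apply mul_le_mul (Real.exp_le_exp.mpr (by linarith [hx.2]))
          (Real.rpow_le_rpow hM.le hx.1.le hs) (Real.rpow_nonneg hM.le _) (Real.exp_nonneg _)
    calc M ^ s * (M * Real.exp (-(2 * M))) = M * (Real.exp (-(2*M)) * M ^ s) := by ring
    _ = _ := h3.symm
    _ ≤ _ := h4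
  linarith

/-- continuity of s ↦ Γ(s+1) on s > 0 region -/
lemma contGamma : ContinuousOn (fun s : ℝ => Real.Gamma (s + 1)) (Ioi (0:ℝ)) := by
  intro s hs
  have h : ∀ m : ℕ, s + 1 ≠ -m := by
    intro m hc
    have h0 : (0:ℝ) ≤ m := Nat.cast_nonneg m
    have hs' : (0:ℝ) < s := hs
    linarith
  have h2 : ContinuousAt (fun y : ℝ => Real.Gamma (y + 1)) s :=
    ContinuousAt.comp (x := s) (f := fun y : ℝ => y + 1)
      (Real.differentiableAt_Gamma h).continuousAt ((continuous_add_right 1).continuousAt)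
  exact h2.continuousWithinAt

lemma Gammapos {s : ℝ} (hs : 0 < s) : 0 < Real.Gamma (s + 1) :=
  Real.Gamma_pos_of_pos (by linarith)

lemma contW {x : ℝ} (hx : 0 < x) :
    ContinuousOn (fun s : ℝ => x ^ s / Real.Gamma (s + 1)) (Ioi (0:ℝ)) := by
  apply ContinuousOn.div
  · exact ContinuousOn.congr
      ((Real.continuous_exp.comp (continuous_const.mul continuous_id)).continuousOn)
      (fun s _ => Real.rpow_def_of_pos hx s)
  · exact contGamma
  · exact fun s hs => (Gammapos hs).ne'

/-- integrability of the volterra integrand -/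
lemma int_w {x : ℝ} (hx : 0 < x) :
    IntegrableOn (fun s : ℝ => x ^ s / Real.Gamma (s + 1)) (Ioi (0:ℝ)) := by
  set M := max 1 (2 * x) with hMdef
  have hM1 : (1:ℝ) ≤ M := le_max_left _ _
  have hMx : 2 * x ≤ M := le_max_right _ _
  have hM : (0:ℝ) < M := lt_of_lt_of_le one_pos hM1
  have hbound : IntegrableOn
      (fun s : ℝ => Real.exp (-(Real.log 2) * s) * (Real.exp (2*M) / M)) (Ioi (0:ℝ)) :=
    (exp_neg_integrableOn_Ioi 0 (Real.log_pos one_lt_two)).mul_const _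
  apply hbound.mono' ((contW hx).aestronglyMeasurable measurableSet_Ioi)
  filter_upwards [ae_restrict_mem measurableSet_Ioi] with s hs
  have hs0 : (0:ℝ) < s := hs
  have hΓ : 0 < Real.Gamma (s + 1) := Gammapos hs0
  have hlb : M ^ s * (M * Real.exp (-(2 * M))) ≤ Real.Gamma (s + 1) := Gamma_lb hs0.le hM
  have hlbpos : 0 < M ^ s * (M * Real.exp (-(2 * M))) := by positivity
  rw [Real.norm_eq_abs, abs_of_nonneg (div_nonneg (Real.rpow_nonneg hx.le _) hΓ.le)]
  have step1 : x ^ s / Real.Gamma (s + 1) ≤ x ^ s / (M ^ s * (M * Real.exp (-(2 * M)))) :=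
    div_le_div_of_nonneg_left (Real.rpow_nonneg hx.le _) hlbpos hlb
  have step2 : x ^ s / (M ^ s * (M * Real.exp (-(2 * M))))
      = (x / M) ^ s * (Real.exp (2*M) / M) := by
    rw [Real.div_rpow hx.le hM.le, Real.exp_neg]
    field_simp
  have step3 : (x / M) ^ s ≤ Real.exp (-(Real.log 2) * s) := by
    have e1 : ((1:ℝ)/2) ^ s = Real.exp (-(Real.log 2) * s) := by
      rw [Real.rpow_def_of_pos (by norm_num : (0:ℝ) < 1/2), one_div, Real.log_inv]
    rw [← e1]
    apply Real.rpow_le_rpow (by positivity) _ hs0.le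
    rw [div_le_div_iff₀ hM (by norm_num : (0:ℝ) < 2)]
    linarith
  calc x ^ s / Real.Gamma (s + 1) ≤ (x / M) ^ s * (Real.exp (2*M) / M) := by
        rw [← step2]; exact step1
  _ ≤ Real.exp (-(Real.log 2) * s) * (Real.exp (2*M) / M) :=
        mul_le_mul_of_nonneg_right step3 (by positivity)
lemma volterra_nonneg {x : ℝ} (hx : 0 ≤ x) : 0 ≤ volterra x :=
  setIntegral_nonneg measurableSet_Ioi fun s hs =>
    div_nonneg (Real.rpow_nonneg hx s) (Gammapos (mem_Ioi.mp hs)).le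

lemma volterra_mono {x y : ℝ} (hx : 0 < x) (hxy : x ≤ y) : volterra x ≤ volterra y := by
  apply setIntegral_mono_on (int_w hx) (int_w (hx.trans_le hxy)) measurableSet_Ioi
  intro s hs
  have hΓ : 0 < Real.Gamma (s + 1) := Gammapos hs
  exact (div_le_div_iff_of_pos_right hΓ).mpr (Real.rpow_le_rpow hx.le hxy (le_of_lt hs))

lemma volterra_continuousAt {x : ℝ} (hx : 0 < x) : ContinuousAt volterra x := by
  have key : ContinuousAt (fun y : ℝ => ∫ s in Ioi (0:ℝ), y ^ s / Real.Gamma (s + 1)) x := by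
    apply continuousAt_of_dominated (bound := fun s => (2*x) ^ s / Real.Gamma (s + 1))
    · filter_upwards [Ioo_mem_nhds (by linarith : x/2 < x) (by linarith : x < 2*x)] with y hy
      exact (contW (by linarith [hy.1] : (0:ℝ) < y)).aestronglyMeasurable measurableSet_Ioi
    · filter_upwards [Ioo_mem_nhds (by linarith : x/2 < x) (by linarith : x < 2*x)] with y hy
      filter_upwards [ae_restrict_mem measurableSet_Ioi] with s hs
      have hy0 : (0:ℝ) < y := by linarith [hy.1]
      have hΓ : 0 < Real.Gamma (s + 1) := Gammapos hs
      rw [Real.norm_eq_abs, abs_of_nonneg (div_nonneg (Real.rpow_nonneg hy0.le _) hΓ.le)]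
      exact (div_le_div_iff_of_pos_right hΓ).mpr
        (Real.rpow_le_rpow hy0.le (le_of_lt hy.2) (le_of_lt hs))
    · exact int_w (by linarith : (0:ℝ) < 2*x)
    · filter_upwards [ae_restrict_mem measurableSet_Ioi] with s _
      exact (Real.continuousAt_rpow_const x s (Or.inl hx.ne')).div_const _
  exact key

lemma volterra_contOn : ContinuousOn volterra (Ioi (0:ℝ)) :=
  fun x hx => (volterra_continuousAt hx).continuousWithinAt

section Generic

variable {μ : Measure ℝ} [SigmaFinite μ]

lemma sym_int {F G : ℝ → ℝ} (hF : Integrable F μ) (hG : Integrable G μ) :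
    ∫ p : ℝ × ℝ, (F p.1 * G p.2 + F p.2 * G p.1) ∂(μ.prod μ)
      = 2 * ((∫ x, F x ∂μ) * (∫ x, G x ∂μ)) := by
  have efun : (fun p : ℝ × ℝ => F p.2 * G p.1) = fun p : ℝ × ℝ => G p.1 * F p.2 :=
    funext fun p => mul_comm _ _
  have i1 : Integrable (fun p : ℝ × ℝ => F p.1 * G p.2) (μ.prod μ) := hF.mul_prod hG
  have i2 : Integrable (fun p : ℝ × ℝ => F p.2 * G p.1) (μ.prod μ) := by
    rw [efun]; exact hG.mul_prod hF
  rw [integral_add i1 i2, integral_prod_mul, efun, integral_prod_mul]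
  ring

lemma sym_int_integrable {F G : ℝ → ℝ} (hF : Integrable F μ) (hG : Integrable G μ) :
    Integrable (fun p : ℝ × ℝ => F p.1 * G p.2 + F p.2 * G p.1) (μ.prod μ) := by
  have efun : (fun p : ℝ × ℝ => F p.2 * G p.1) = fun p : ℝ × ℝ => G p.1 * F p.2 :=
    funext fun p => mul_comm _ _
  exact (hF.mul_prod hG).add (by rw [efun]; exact hG.mul_prod hF)

lemma mul_integral_le {A B C D : ℝ → ℝ}
    (hA : Integrable A μ) (hB : Integrable B μ) (hC : Integrable C μ) (hD : Integrable D μ)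
    (h : ∀ᵐ p ∂(μ.prod μ), A p.1 * D p.2 + A p.2 * D p.1 ≤ B p.1 * C p.2 + B p.2 * C p.1) :
    (∫ x, A x ∂μ) * (∫ x, D x ∂μ) ≤ (∫ x, B x ∂μ) * (∫ x, C x ∂μ) := by
  have key := integral_mono_ae (sym_int_integrable hA hD) (sym_int_integrable hB hC) h
  rw [sym_int hA hD, sym_int hB hC] at key
  linarith

lemma mul_integral_le2 {A1 D1 A2 D2 B1 C1 B2 C2 : ℝ → ℝ}
    (hA1 : Integrable A1 μ) (hD1 : Integrable D1 μ) (hA2 : Integrable A2 μ)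
    (hD2 : Integrable D2 μ) (hB1 : Integrable B1 μ) (hC1 : Integrable C1 μ)
    (hB2 : Integrable B2 μ) (hC2 : Integrable C2 μ)
    (h : ∀ᵐ p ∂(μ.prod μ),
      (A1 p.1 * D1 p.2 + A1 p.2 * D1 p.1) + (A2 p.1 * D2 p.2 + A2 p.2 * D2 p.1)
        ≤ (B1 p.1 * C1 p.2 + B1 p.2 * C1 p.1) + (B2 p.1 * C2 p.2 + B2 p.2 * C2 p.1)) :
    (∫ x, A1 x ∂μ) * (∫ x, D1 x ∂μ) + (∫ x, A2 x ∂μ) * (∫ x, D2 x ∂μ)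
      ≤ (∫ x, B1 x ∂μ) * (∫ x, C1 x ∂μ) + (∫ x, B2 x ∂μ) * (∫ x, C2 x ∂μ) := by
  have iL : Integrable (fun p : ℝ × ℝ =>
      (A1 p.1 * D1 p.2 + A1 p.2 * D1 p.1) + (A2 p.1 * D2 p.2 + A2 p.2 * D2 p.1)) (μ.prod μ) :=
    (sym_int_integrable hA1 hD1).add (sym_int_integrable hA2 hD2)
  have iR : Integrable (fun p : ℝ × ℝ =>
      (B1 p.1 * C1 p.2 + B1 p.2 * C1 p.1) + (B2 p.1 * C2 p.2 + B2 p.2 * C2 p.1)) (μ.prod μ) :=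
    (sym_int_integrable hB1 hC1).add (sym_int_integrable hB2 hC2)
  have key := integral_mono_ae iL iR h
  rw [integral_add (sym_int_integrable hA1 hD1) (sym_int_integrable hA2 hD2),
    integral_add (sym_int_integrable hB1 hC1) (sym_int_integrable hB2 hC2),
    sym_int hA1 hD1, sym_int hA2 hD2, sym_int hB1 hC1, sym_int hB2 hC2] at key
  linarith

lemma ratio_step {A B C D : ℝ → ℝ}
    (hA : Integrable A μ) (hB : Integrable B μ) (hC : Integrable C μ) (hD : Integrable D μ)
    (h1 : ∀ᵐ x ∂μ, A x + D x ≤ B x + C x)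
    (h2 : ∀ᵐ p ∂(μ.prod μ), A p.1 * D p.2 + A p.2 * D p.1 ≤ B p.1 * C p.2 + B p.2 * C p.1) :
    (1 + ∫ x, A x ∂μ) * (1 + ∫ x, D x ∂μ) ≤ (1 + ∫ x, B x ∂μ) * (1 + ∫ x, C x ∂μ) := by
  have hlin : (∫ x, A x ∂μ) + (∫ x, D x ∂μ) ≤ (∫ x, B x ∂μ) + (∫ x, C x ∂μ) := by
    rw [← integral_add hA hD, ← integral_add hB hC]
    exact integral_mono_ae (hA.add hD) (hB.add hC) h1
  have hprod := mul_integral_le hA hB hC hD h2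
  nlinarith [hlin, hprod]

end Generic
/-- pointwise core for nu_cross, ordered case -/
lemma nu_cross_pt {x y lam lam' s t : ℝ} (hy : 0 < y) (hxy : y ≤ x)
    (hl' : 0 < lam') (hll : lam' ≤ lam) (hs : 0 < s) (hst : s ≤ t) :
    (x*lam') ^ s / Real.Gamma (s+1) * ((y*lam) ^ t / Real.Gamma (t+1))
      + (x*lam') ^ t / Real.Gamma (t+1) * ((y*lam) ^ s / Real.Gamma (s+1))
    ≤ (y*lam') ^ s / Real.Gamma (s+1) * ((x*lam) ^ t / Real.Gamma (t+1))
      + (y*lam') ^ t / Real.Gamma (t+1) * ((x*lam) ^ s / Real.Gamma (s+1)) := by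
  have hx : 0 < x := hy.trans_le hxy
  have hl : 0 < lam := hl'.trans_le hll
  have ht : 0 < t := lt_of_lt_of_le hs hst
  have hΓs : 0 < Real.Gamma (s + 1) := Gammapos hs
  have hΓt : 0 < Real.Gamma (t + 1) := Gammapos ht
  have main : (x*lam') ^ s * (y*lam) ^ t + (x*lam') ^ t * (y*lam) ^ s
      ≤ (y*lam') ^ s * (x*lam) ^ t + (y*lam') ^ t * (x*lam) ^ s := by
    rw [Real.mul_rpow hx.le hl'.le, Real.mul_rpow hx.le hl'.le,
        Real.mul_rpow hy.le hl.le, Real.mul_rpow hy.le hl.le,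
        Real.mul_rpow hy.le hl'.le, Real.mul_rpow hy.le hl'.le,
        Real.mul_rpow hx.le hl.le, Real.mul_rpow hx.le hl.le]
    have S1 : lam' ^ t * lam ^ s ≤ lam' ^ s * lam ^ t := rpow_rearrange hl' hll hst
    have S2 : y ^ t * x ^ s ≤ y ^ s * x ^ t := rpow_rearrange hy hxy hst
    nlinarith [mul_nonneg (sub_nonneg.2 S1) (sub_nonneg.2 S2),
      Real.rpow_nonneg hx.le s, Real.rpow_nonneg hx.le t,
      Real.rpow_nonneg hy.le s, Real.rpow_nonneg hy.le t,
      Real.rpow_nonneg hl'.le s, Real.rpow_nonneg hl'.le t,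
      Real.rpow_nonneg hl.le s, Real.rpow_nonneg hl.le t]
  calc (x*lam') ^ s / Real.Gamma (s+1) * ((y*lam) ^ t / Real.Gamma (t+1))
      + (x*lam') ^ t / Real.Gamma (t+1) * ((y*lam) ^ s / Real.Gamma (s+1))
      = ((x*lam') ^ s * (y*lam) ^ t + (x*lam') ^ t * (y*lam) ^ s)
          * ((Real.Gamma (s+1))⁻¹ * (Real.Gamma (t+1))⁻¹) := by ring
    _ ≤ ((y*lam') ^ s * (x*lam) ^ t + (y*lam') ^ t * (x*lam) ^ s)
          * ((Real.Gamma (s+1))⁻¹ * (Real.Gamma (t+1))⁻¹) := by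
        apply mul_le_mul_of_nonneg_right main (by positivity)
    _ = _ := by ring

/-- pointwise core for nu_cross2, ordered case -/
lemma nu_cross2_pt {T1 T2 x y lam lam' s t : ℝ} (hT1 : 0 < T1) (hT : T1 ≤ T2)
    (hx : 0 < x) (hy : 0 < y) (hl' : 0 < lam') (hll : lam' ≤ lam) (hs : 0 < s) (hst : s ≤ t) :
    ((T2*x*lam') ^ s / Real.Gamma (s+1) * ((T1*y*lam) ^ t / Real.Gamma (t+1))
      + (T2*x*lam') ^ t / Real.Gamma (t+1) * ((T1*y*lam) ^ s / Real.Gamma (s+1)))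
    + ((T2*y*lam') ^ s / Real.Gamma (s+1) * ((T1*x*lam) ^ t / Real.Gamma (t+1))
      + (T2*y*lam') ^ t / Real.Gamma (t+1) * ((T1*x*lam) ^ s / Real.Gamma (s+1)))
    ≤ ((T1*x*lam') ^ s / Real.Gamma (s+1) * ((T2*y*lam) ^ t / Real.Gamma (t+1))
      + (T1*x*lam') ^ t / Real.Gamma (t+1) * ((T2*y*lam) ^ s / Real.Gamma (s+1)))
    + ((T1*y*lam') ^ s / Real.Gamma (s+1) * ((T2*x*lam) ^ t / Real.Gamma (t+1))
      + (T1*y*lam') ^ t / Real.Gamma (t+1) * ((T2*x*lam) ^ s / Real.Gamma (s+1))) := by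
  have hT2 : 0 < T2 := hT1.trans_le hT
  have hl : 0 < lam := hl'.trans_le hll
  have ht : 0 < t := lt_of_lt_of_le hs hst
  have hΓs : 0 < Real.Gamma (s + 1) := Gammapos hs
  have hΓt : 0 < Real.Gamma (t + 1) := Gammapos ht
  have tri : ∀ u v w : ℝ, 0 < u → 0 < v → 0 < w → ∀ r : ℝ,
      (u*v*w) ^ r = u ^ r * v ^ r * w ^ r := by
    intro u v w hu hv hw r
    rw [Real.mul_rpow (mul_nonneg hu.le hv.le) hw.le, Real.mul_rpow hu.le hv.le]
  have main : ((T2*x*lam') ^ s * (T1*y*lam) ^ t + (T2*x*lam') ^ t * (T1*y*lam) ^ s)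
      + ((T2*y*lam') ^ s * (T1*x*lam) ^ t + (T2*y*lam') ^ t * (T1*x*lam) ^ s)
      ≤ ((T1*x*lam') ^ s * (T2*y*lam) ^ t + (T1*x*lam') ^ t * (T2*y*lam) ^ s)
      + ((T1*y*lam') ^ s * (T2*x*lam) ^ t + (T1*y*lam') ^ t * (T2*x*lam) ^ s) := by
    rw [tri T2 x lam' hT2 hx hl' s, tri T2 x lam' hT2 hx hl' t,
        tri T1 y lam hT1 hy hl s, tri T1 y lam hT1 hy hl t,
        tri T2 y lam' hT2 hy hl' s, tri T2 y lam' hT2 hy hl' t,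
        tri T1 x lam hT1 hx hl s, tri T1 x lam hT1 hx hl t,
        tri T1 x lam' hT1 hx hl' s, tri T1 x lam' hT1 hx hl' t,
        tri T2 y lam hT2 hy hl s, tri T2 y lam hT2 hy hl t,
        tri T1 y lam' hT1 hy hl' s, tri T1 y lam' hT1 hy hl' t,
        tri T2 x lam hT2 hx hl s, tri T2 x lam hT2 hx hl t]
    have S1 : lam' ^ t * lam ^ s ≤ lam' ^ s * lam ^ t := rpow_rearrange hl' hll hst
    have S2 : T1 ^ t * T2 ^ s ≤ T1 ^ s * T2 ^ t := rpow_rearrange hT1 hT hst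
    have hxys : (0:ℝ) ≤ x ^ s * y ^ t + x ^ t * y ^ s :=
      add_nonneg (mul_nonneg (Real.rpow_nonneg hx.le s) (Real.rpow_nonneg hy.le t))
        (mul_nonneg (Real.rpow_nonneg hx.le t) (Real.rpow_nonneg hy.le s))
    nlinarith [mul_nonneg (mul_nonneg hxys (sub_nonneg.2 S1)) (sub_nonneg.2 S2)]
  calc ((T2*x*lam') ^ s / Real.Gamma (s+1) * ((T1*y*lam) ^ t / Real.Gamma (t+1))
      + (T2*x*lam') ^ t / Real.Gamma (t+1) * ((T1*y*lam) ^ s / Real.Gamma (s+1)))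
    + ((T2*y*lam') ^ s / Real.Gamma (s+1) * ((T1*x*lam) ^ t / Real.Gamma (t+1))
      + (T2*y*lam') ^ t / Real.Gamma (t+1) * ((T1*x*lam) ^ s / Real.Gamma (s+1)))
      = (((T2*x*lam') ^ s * (T1*y*lam) ^ t + (T2*x*lam') ^ t * (T1*y*lam) ^ s)
        + ((T2*y*lam') ^ s * (T1*x*lam) ^ t + (T2*y*lam') ^ t * (T1*x*lam) ^ s))
          * ((Real.Gamma (s+1))⁻¹ * (Real.Gamma (t+1))⁻¹) := by ring
    _ ≤ (((T1*x*lam') ^ s * (T2*y*lam) ^ t + (T1*x*lam') ^ t * (T2*y*lam) ^ s)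
        + ((T1*y*lam') ^ s * (T2*x*lam) ^ t + (T1*y*lam') ^ t * (T2*x*lam) ^ s))
          * ((Real.Gamma (s+1))⁻¹ * (Real.Gamma (t+1))⁻¹) := by
        apply mul_le_mul_of_nonneg_right main (by positivity)
    _ = _ := by ring

lemma prod_ae_mem :
    ∀ᵐ p ∂((volume.restrict (Ioi (0:ℝ))).prod (volume.restrict (Ioi (0:ℝ)))),
      p ∈ (Ioi (0:ℝ)) ×ˢ (Ioi (0:ℝ)) := by
  rw [Measure.prod_restrict]
  exact ae_restrict_mem (measurableSet_Ioi.prod measurableSet_Ioi)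

/-- cross inequality for the Volterra function -/
lemma nu_cross {x y lam lam' : ℝ} (hy : 0 < y) (hxy : y ≤ x)
    (hl' : 0 < lam') (hll : lam' ≤ lam) :
    volterra (x * lam') * volterra (y * lam) ≤ volterra (y * lam') * volterra (x * lam) := by
  have hx : 0 < x := hy.trans_le hxy
  have hl : 0 < lam := hl'.trans_le hll
  apply mul_integral_le (int_w (by positivity)) (int_w (by positivity))
    (int_w (by positivity)) (int_w (by positivity))
  filter_upwards [prod_ae_mem] with p hp
  obtain ⟨hs, ht⟩ := hp
  rcases le_total p.1 p.2 with h | h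
  · exact nu_cross_pt hy hxy hl' hll hs h
  · have key := nu_cross_pt (s := p.2) (t := p.1) hy hxy hl' hll ht h
    linarith

/-- four-term cross inequality for the Volterra function -/
lemma nu_cross2 {T1 T2 x y lam lam' : ℝ} (hT1 : 0 < T1) (hT : T1 ≤ T2)
    (hx : 0 < x) (hy : 0 < y) (hl' : 0 < lam') (hll : lam' ≤ lam) :
    volterra (T2*x*lam') * volterra (T1*y*lam) + volterra (T2*y*lam') * volterra (T1*x*lam)
      ≤ volterra (T1*x*lam') * volterra (T2*y*lam)
        + volterra (T1*y*lam') * volterra (T2*x*lam) := by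
  have hT2 : 0 < T2 := hT1.trans_le hT
  have hl : 0 < lam := hl'.trans_le hll
  apply mul_integral_le2 (int_w (by positivity)) (int_w (by positivity))
    (int_w (by positivity)) (int_w (by positivity)) (int_w (by positivity))
    (int_w (by positivity)) (int_w (by positivity)) (int_w (by positivity))
  filter_upwards [prod_ae_mem] with p hp
  obtain ⟨hs, ht⟩ := hp
  rcases le_total p.1 p.2 with h | h
  · exact nu_cross2_pt hT1 hT hx hy hl' hll hs h
  · have key := nu_cross2_pt (s := p.2) (t := p.1) hT1 hT hx hy hl' hll ht h
    linarith

/-- sum inequality for the Volterra function -/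
lemma nu_sum {T1 T2 u lam lam' : ℝ} (hT1 : 0 < T1) (hT : T1 ≤ T2) (hu : 0 < u)
    (hl' : 0 < lam') (hll : lam' ≤ lam) :
    volterra (T2*u*lam') + volterra (T1*u*lam)
      ≤ volterra (T1*u*lam') + volterra (T2*u*lam) := by
  have hT2 : 0 < T2 := hT1.trans_le hT
  have hl : 0 < lam := hl'.trans_le hll
  unfold volterra
  rw [← integral_add (int_w (by positivity)) (int_w (by positivity)),
      ← integral_add (int_w (by positivity)) (int_w (by positivity))]
  apply setIntegral_mono_on
    ((int_w (by positivity)).add (int_w (by positivity)))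
    ((int_w (by positivity)).add (int_w (by positivity))) measurableSet_Ioi
  intro s hs
  have hs0 : (0:ℝ) < s := hs
  have hG : 0 < Real.Gamma (s + 1) := Gammapos hs0
  have tri : ∀ a b c : ℝ, 0 < a → 0 < b → 0 < c →
      (a*b*c : ℝ) ^ s = a ^ s * b ^ s * c ^ s := by
    intro a b c ha hb hc
    rw [Real.mul_rpow (mul_nonneg ha.le hb.le) hc.le, Real.mul_rpow ha.le hb.le]
  have goalshape : ∀ A B C D : ℝ,
      A / Real.Gamma (s+1) + B / Real.Gamma (s+1) ≤ C / Real.Gamma (s+1) + D / Real.Gamma (s+1)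
        ↔ A + B ≤ C + D := by
    intro A B C D
    rw [← add_div, ← add_div]
    exact div_le_div_iff_of_pos_right hG
  simp only [Pi.add_apply]
  rw [goalshape]
  rw [tri T2 u lam' hT2 hu hl', tri T1 u lam hT1 hu hl,
      tri T1 u lam' hT1 hu hl', tri T2 u lam hT2 hu hl]
  have S1 : T1 ^ s ≤ T2 ^ s := Real.rpow_le_rpow hT1.le hT hs0.le
  have S2 : lam' ^ s ≤ lam ^ s := Real.rpow_le_rpow hl'.le hll hs0.le
  nlinarith [mul_nonneg (mul_nonneg (sub_nonneg.2 S1) (sub_nonneg.2 S2))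
    (Real.rpow_nonneg hu.le s)]
noncomputable def Jfun (T c lam : ℝ) : ℝ :=
  ∫ v in Ioo (0:ℝ) 1, Real.exp (-(c / v)) / v * volterra (T * (1 - v) * lam)

lemma exp_div_le {c v : ℝ} (hc : 0 < c) (hv : 0 < v) :
    Real.exp (-(c / v)) / v ≤ (Real.exp 1 * c)⁻¹ := by
  have h1 : Real.exp 1 * (c / v) ≤ Real.exp (c / v) := by
    have h2 : Real.exp (c / v) = Real.exp 1 * Real.exp (c / v - 1) := by
      rw [← Real.exp_add]; ring_nf
    have h3 : c / v - 1 + 1 ≤ Real.exp (c / v - 1) := Real.add_one_le_exp _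
    rw [h2]
    have := Real.exp_pos 1
    nlinarith
  rw [Real.exp_neg, div_eq_mul_inv, ← mul_inv]
  apply inv_anti₀ (by positivity)
  have h4 : Real.exp 1 * (c / v) * v ≤ Real.exp (c / v) * v :=
    mul_le_mul_of_nonneg_right h1 hv.le
  have h5 : Real.exp 1 * (c / v) * v = Real.exp 1 * c := by field_simp
  nlinarith [h4, h5]

lemma exp_cross {c1 c2 v w : ℝ} (hc : c1 ≤ c2) (hv : 0 < v) (hvw : v ≤ w) :
    Real.exp (-(c2/v))/v * (Real.exp (-(c1/w))/w)
      ≤ Real.exp (-(c1/v))/v * (Real.exp (-(c2/w))/w) := by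
  have hw : 0 < w := hv.trans_le hvw
  have key : Real.exp (-(c2/v)) * Real.exp (-(c1/w))
      ≤ Real.exp (-(c1/v)) * Real.exp (-(c2/w)) := by
    rw [← Real.exp_add, ← Real.exp_add]
    apply Real.exp_le_exp.mpr
    have hd : (c2 - c1)/w ≤ (c2 - c1)/v :=
      div_le_div_of_nonneg_left (sub_nonneg.2 hc) hv hvw
    rw [sub_div, sub_div] at hd
    linarith
  rw [div_mul_div_comm, div_mul_div_comm]
  exact (div_le_div_iff_of_pos_right (by positivity)).mpr key

lemma int_J {T c lam : ℝ} (hT : 0 < T) (hc : 0 < c) (hl : 0 < lam) :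
    IntegrableOn (fun v => Real.exp (-(c/v))/v * volterra (T*(1-v)*lam)) (Ioo (0:ℝ) 1) := by
  haveI : IsFiniteMeasure (volume.restrict (Ioo (0:ℝ) 1)) :=
    ⟨by rw [Measure.restrict_apply_univ]; exact measure_Ioo_lt_top⟩
  have hconst : Integrable (fun _ : ℝ => (Real.exp 1 * c)⁻¹ * volterra (T*lam))
      (volume.restrict (Ioo (0:ℝ) 1)) := integrable_const _
  apply hconst.mono'
  · apply ContinuousOn.aestronglyMeasurable _ measurableSet_Ioo
    apply ContinuousOn.mul
    · apply ContinuousOn.div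
      · apply Real.continuous_exp.comp_continuousOn
        exact (continuousOn_const.div continuousOn_id (fun v hv => ne_of_gt hv.1)).neg
      · exact continuousOn_id
      · exact fun v hv => ne_of_gt hv.1
    · apply volterra_contOn.comp
        ((continuous_const.mul (continuous_const.sub continuous_id)).mul
          continuous_const).continuousOn
      intro v hv
      have : (0:ℝ) < T * (1 - v) * lam := by
        have := hv.2; have := hv.1
        apply mul_pos (mul_pos hT (by linarith)) hl
      exact this
  · filter_upwards [ae_restrict_mem measurableSet_Ioo] with v hv
    have hv1 : (0:ℝ) < v := hv.1
    have hv2 : v < 1 := hv.2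
    have harg : (0:ℝ) < T * (1 - v) * lam := mul_pos (mul_pos hT (by linarith)) hl
    have hargle : T * (1 - v) * lam ≤ T * lam := by nlinarith
    rw [Real.norm_eq_abs, abs_of_nonneg (mul_nonneg
      (div_nonneg (Real.exp_nonneg _) hv1.le) (volterra_nonneg harg.le))]
    apply mul_le_mul (exp_div_le hc hv1) (volterra_mono harg hargle)
      (volterra_nonneg harg.le) (by positivity)

lemma J_nonneg {T c lam : ℝ} (hT : 0 < T) (hl : 0 < lam) : 0 ≤ Jfun T c lam := by
  apply setIntegral_nonneg measurableSet_Ioo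
  intro v hv
  have harg : (0:ℝ) ≤ T * (1 - v) * lam :=
    le_of_lt (mul_pos (mul_pos hT (by linarith [hv.2])) hl)
  exact mul_nonneg (div_nonneg (Real.exp_nonneg _) (le_of_lt hv.1)) (volterra_nonneg harg)

lemma Jprod_ae_mem :
    ∀ᵐ p ∂((volume.restrict (Ioo (0:ℝ) 1)).prod (volume.restrict (Ioo (0:ℝ) 1))),
      p ∈ (Ioo (0:ℝ) 1) ×ˢ (Ioo (0:ℝ) 1) := by
  rw [Measure.prod_restrict]
  exact ae_restrict_mem (measurableSet_Ioo.prod measurableSet_Ioo)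

/-- M-step pointwise, ordered case -/
lemma M_pt {T c1 c2 lam lam' v w : ℝ} (hT : 0 < T) (hc : c1 ≤ c2)
    (hl' : 0 < lam') (hll : lam' ≤ lam)
    (hv : v ∈ Ioo (0:ℝ) 1) (hw : w ∈ Ioo (0:ℝ) 1) (hvw : v ≤ w) :
    (Real.exp (-(c1/v))/v * volterra (T*(1-v)*lam')) * (Real.exp (-(c2/w))/w * volterra (T*(1-w)*lam))
    + (Real.exp (-(c1/w))/w * volterra (T*(1-w)*lam')) * (Real.exp (-(c2/v))/v * volterra (T*(1-v)*lam))
    ≤ (Real.exp (-(c2/v))/v * volterra (T*(1-v)*lam')) * (Real.exp (-(c1/w))/w * volterra (T*(1-w)*lam))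
    + (Real.exp (-(c2/w))/w * volterra (T*(1-w)*lam')) * (Real.exp (-(c1/v))/v * volterra (T*(1-v)*lam)) := by
  have hx : (0:ℝ) < T * (1 - w) := mul_pos hT (by linarith [hw.2])
  have hxy : T * (1 - w) ≤ T * (1 - v) := by nlinarith [hv.1, hw.1, hvw]
  have hE : Real.exp (-(c2/v))/v * (Real.exp (-(c1/w))/w)
      ≤ Real.exp (-(c1/v))/v * (Real.exp (-(c2/w))/w) := exp_cross hc hv.1 hvw
  have hG : volterra (T*(1-v)*lam') * volterra (T*(1-w)*lam)
      ≤ volterra (T*(1-w)*lam') * volterra (T*(1-v)*lam) := nu_cross hx hxy hl' hll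
  nlinarith [mul_nonneg (sub_nonneg.2 hE) (sub_nonneg.2 hG)]
lemma ratio_M {T c1 c2 lam lam' : ℝ} (hT : 0 < T) (hc1 : 0 < c1) (hc : c1 ≤ c2)
    (hl' : 0 < lam') (hll : lam' ≤ lam) :
    (1 + Jfun T c1 lam') * (1 + Jfun T c2 lam)
      ≤ (1 + Jfun T c2 lam') * (1 + Jfun T c1 lam) := by
  have hl : 0 < lam := hl'.trans_le hll
  have hc2 : 0 < c2 := hc1.trans_le hc
  unfold Jfun
  apply ratio_step (int_J hT hc1 hl') (int_J hT hc2 hl') (int_J hT hc1 hl) (int_J hT hc2 hl)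
  · filter_upwards [ae_restrict_mem measurableSet_Ioo] with v hv
    have hv1 : (0:ℝ) < v := hv.1
    have hE : Real.exp (-(c2/v))/v ≤ Real.exp (-(c1/v))/v :=
      (div_le_div_iff_of_pos_right hv1).mpr (Real.exp_le_exp.mpr (by
        have : c1/v ≤ c2/v := (div_le_div_iff_of_pos_right hv1).mpr hc
        linarith))
    have hargpos : (0:ℝ) < T * (1 - v) := mul_pos hT (by linarith [hv.2])
    have hg : volterra (T*(1-v)*lam') ≤ volterra (T*(1-v)*lam) :=
      volterra_mono (by positivity) (mul_le_mul_of_nonneg_left hll hargpos.le)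
    nlinarith [mul_nonneg (sub_nonneg.2 hE) (sub_nonneg.2 hg)]
  · filter_upwards [Jprod_ae_mem] with p hp
    obtain ⟨hp1, hp2⟩ := hp
    rcases le_total p.1 p.2 with h | h
    · exact M_pt hT hc hl' hll hp1 hp2 h
    · have key := M_pt (v := p.2) (w := p.1) hT hc hl' hll hp2 hp1 h
      linarith

lemma ratio_N {T1 T2 c lam lam' : ℝ} (hT1 : 0 < T1) (hT : T1 ≤ T2) (hc : 0 < c)
    (hl' : 0 < lam') (hll : lam' ≤ lam) :
    (1 + Jfun T2 c lam') * (1 + Jfun T1 c lam)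
      ≤ (1 + Jfun T1 c lam') * (1 + Jfun T2 c lam) := by
  have hl : 0 < lam := hl'.trans_le hll
  have hT2 : 0 < T2 := hT1.trans_le hT
  unfold Jfun
  apply ratio_step (int_J hT2 hc hl') (int_J hT1 hc hl') (int_J hT2 hc hl) (int_J hT1 hc hl)
  · filter_upwards [ae_restrict_mem measurableSet_Ioo] with v hv
    have hu : (0:ℝ) < 1 - v := by linarith [hv.2]
    have hsum := nu_sum hT1 hT hu hl' hll
    have he : (0:ℝ) ≤ Real.exp (-(c/v))/v := div_nonneg (Real.exp_nonneg _) hv.1.le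
    nlinarith [mul_le_mul_of_nonneg_left hsum he]
  · filter_upwards [Jprod_ae_mem] with p hp
    obtain ⟨hp1, hp2⟩ := hp
    have hx : (0:ℝ) < 1 - p.1 := by linarith [hp1.2]
    have hy : (0:ℝ) < 1 - p.2 := by linarith [hp2.2]
    have key := nu_cross2 hT1 hT hx hy hl' hll
    have hee : (0:ℝ) ≤ Real.exp (-(c/p.1))/p.1 * (Real.exp (-(c/p.2))/p.2) :=
      mul_nonneg (div_nonneg (Real.exp_nonneg _) hp1.1.le)
        (div_nonneg (Real.exp_nonneg _) hp2.1.le)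
    nlinarith [mul_le_mul_of_nonneg_left key hee]
/-- `H̄_T^λ(a) = ∫₀^T (e^{−a²/(2r)} / r) ν((T−r)λ) dr`. -/
noncomputable def Hbar (T lam a : ℝ) : ℝ :=
  ∫ r in (0 : ℝ)..T, Real.exp (-(a ^ 2 / (2 * r))) / r * volterra ((T - r) * lam)

/-- `R̄^{λ,λ′}_T(a) = (1 + H̄_T^{λ′}(a)) / (1 + H̄_T^λ(a))`. -/
noncomputable def Rbar (lam lam' T a : ℝ) : ℝ := (1 + Hbar T lam' a) / (1 + Hbar T lam a)

lemma Hbar_eq {T lam a : ℝ} (hT : 0 < T) :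
    Hbar T lam a = Jfun T (a ^ 2 / (2 * T)) lam := by
  have h0 := intervalIntegral.smul_integral_comp_mul_left
    (a := 0) (b := 1)
    (f := fun r => Real.exp (-(a ^ 2 / (2 * r))) / r * volterra ((T - r) * lam)) T
  rw [mul_zero, mul_one] at h0
  unfold Hbar Jfun
  rw [← h0, intervalIntegral.integral_of_le zero_le_one,
      ← Measure.restrict_congr_set Ioo_ae_eq_Ioc, ← integral_smul]
  apply setIntegral_congr_fun measurableSet_Ioo
  intro v hv
  obtain ⟨hv1, hv2⟩ := hv
  simp only [smul_eq_mul]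
  have e2 : T - T * v = T * (1 - v) := by ring
  have e1 : a ^ 2 / (2 * (T * v)) = a ^ 2 / (2 * T) / v := by
    rw [div_div]
    ring_nf
  rw [e2, e1]
  have hTne : T ≠ 0 := hT.ne'
  have hvne : v ≠ 0 := hv1.ne'
  field_simp
/-- Monotonicity of `R̄^{λ,λ′}_T(a)`:
(i) `a ↦ R̄^{λ,λ′}_T(a)` is increasing on `(0,∞)` when `λ′ ≤ λ` and decreasing when `λ′ ≥ λ`;
(ii) `T ↦ R̄^{λ,λ′}_T(a)` is decreasing on `(0,∞)` when `λ′ ≤ λ` and increasing when `λ′ ≥ λ`. -/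
theorem Rbar_monotonicity (lam lam' : ℝ) (hlam : 0 < lam) (hlam' : 0 < lam') :
    (∀ T : ℝ, 0 < T → lam' ≤ lam →
        MonotoneOn (fun a => Rbar lam lam' T a) (Set.Ioi 0)) ∧
    (∀ T : ℝ, 0 < T → lam ≤ lam' →
        AntitoneOn (fun a => Rbar lam lam' T a) (Set.Ioi 0)) ∧
    (∀ a : ℝ, 0 < a → lam' ≤ lam →
        AntitoneOn (fun T => Rbar lam lam' T a) (Set.Ioi 0)) ∧
    (∀ a : ℝ, 0 < a → lam ≤ lam' →
        MonotoneOn (fun T => Rbar lam lam' T a) (Set.Ioi 0)) := by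
  have hpos : ∀ T c mu : ℝ, 0 < T → 0 < mu → (0:ℝ) < 1 + Jfun T c mu := by
    intro T c mu hT hmu
    linarith [J_nonneg (c := c) hT hmu]
  refine ⟨?_, ?_, ?_, ?_⟩
  · -- monotone in a, lam' ≤ lam
    intro T hT hll a1 ha1 a2 ha2 h12
    have hA1 : (0:ℝ) < a1 := ha1
    have hA2 : (0:ℝ) < a2 := ha2
    simp only [Rbar, Hbar_eq hT]
    rw [div_le_div_iff₀ (hpos _ _ _ hT hlam) (hpos _ _ _ hT hlam)]
    have hc1 : (0:ℝ) < a1 ^ 2 / (2 * T) := by positivity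
    have hcc : a1 ^ 2 / (2 * T) ≤ a2 ^ 2 / (2 * T) :=
      (div_le_div_iff_of_pos_right (by positivity)).mpr (by nlinarith)
    linarith [ratio_M hT hc1 hcc hlam' hll]
  · -- antitone in a, lam ≤ lam'
    intro T hT hll a1 ha1 a2 ha2 h12
    have hA1 : (0:ℝ) < a1 := ha1
    have hA2 : (0:ℝ) < a2 := ha2
    simp only [Rbar, Hbar_eq hT]
    rw [div_le_div_iff₀ (hpos _ _ _ hT hlam) (hpos _ _ _ hT hlam)]
    have hc1 : (0:ℝ) < a1 ^ 2 / (2 * T) := by positivity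
    have hcc : a1 ^ 2 / (2 * T) ≤ a2 ^ 2 / (2 * T) :=
      (div_le_div_iff_of_pos_right (by positivity)).mpr (by nlinarith)
    linarith [ratio_M (lam := lam') (lam' := lam) hT hc1 hcc hlam hll]
  · -- antitone in T, lam' ≤ lam
    intro a ha hll T1 hT1 T2 hT2 h12
    have hTT1 : (0:ℝ) < T1 := hT1
    have hTT2 : (0:ℝ) < T2 := hT2
    have hA : (0:ℝ) < a := ha
    simp only [Rbar, Hbar_eq hTT1, Hbar_eq hTT2]
    have hc1 : (0:ℝ) < a ^ 2 / (2 * T1) := by positivity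
    have hc2 : (0:ℝ) < a ^ 2 / (2 * T2) := by positivity
    have hc21 : a ^ 2 / (2 * T2) ≤ a ^ 2 / (2 * T1) :=
      div_le_div_of_nonneg_left (by positivity) (by positivity) (by linarith)
    calc (1 + Jfun T2 (a ^ 2 / (2 * T2)) lam') / (1 + Jfun T2 (a ^ 2 / (2 * T2)) lam)
        ≤ (1 + Jfun T2 (a ^ 2 / (2 * T1)) lam') / (1 + Jfun T2 (a ^ 2 / (2 * T1)) lam) := by
          rw [div_le_div_iff₀ (hpos _ _ _ hTT2 hlam) (hpos _ _ _ hTT2 hlam)]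
          exact ratio_M hTT2 hc2 hc21 hlam' hll
      _ ≤ (1 + Jfun T1 (a ^ 2 / (2 * T1)) lam') / (1 + Jfun T1 (a ^ 2 / (2 * T1)) lam) := by
          rw [div_le_div_iff₀ (hpos _ _ _ hTT2 hlam) (hpos _ _ _ hTT1 hlam)]
          exact ratio_N hTT1 h12 hc1 hlam' hll
  · -- monotone in T, lam ≤ lam'
    intro a ha hll T1 hT1 T2 hT2 h12
    have hTT1 : (0:ℝ) < T1 := hT1
    have hTT2 : (0:ℝ) < T2 := hT2
    have hA : (0:ℝ) < a := ha
    simp only [Rbar, Hbar_eq hTT1, Hbar_eq hTT2]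
    have hc1 : (0:ℝ) < a ^ 2 / (2 * T1) := by positivity
    have hc2 : (0:ℝ) < a ^ 2 / (2 * T2) := by positivity
    have hc21 : a ^ 2 / (2 * T2) ≤ a ^ 2 / (2 * T1) :=
      div_le_div_of_nonneg_left (by positivity) (by positivity) (by linarith)
    calc (1 + Jfun T1 (a ^ 2 / (2 * T1)) lam') / (1 + Jfun T1 (a ^ 2 / (2 * T1)) lam)
        ≤ (1 + Jfun T2 (a ^ 2 / (2 * T1)) lam') / (1 + Jfun T2 (a ^ 2 / (2 * T1)) lam) := by
          rw [div_le_div_iff₀ (hpos _ _ _ hTT1 hlam) (hpos _ _ _ hTT2 hlam)]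
          linarith [ratio_N (lam := lam') (lam' := lam) hTT1 h12 hc1 hlam hll]
      _ ≤ (1 + Jfun T2 (a ^ 2 / (2 * T2)) lam') / (1 + Jfun T2 (a ^ 2 / (2 * T2)) lam) := by
          rw [div_le_div_iff₀ (hpos _ _ _ hTT2 hlam) (hpos _ _ _ hTT2 hlam)]
          linarith [ratio_M (lam := lam') (lam' := lam) hTT2 hc2 hc21 hlam hll]
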